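/- Löb induction is valid: for every world 𝐔, clock κ at 𝐔, and monotone predicate φ, if 𝐔 ⊩ (▷κ φ ⇒ φ), then 𝐔 ⊩ φ. The proof proceeds by induction on the time ∂_U(κ) assigned to κ. -/

import Mathlib

/-- A world of the base category `CLK`: a non-empty finite set of clock names
(represented as `Fin n` with `0 < n`) together with a time assignment. -/
structure World where
  n : ℕ
  pos : 0 < n
  time : Fin n → ℕ

/-- A morphism of worlds `ρ : V ⟶ U`; its action `map` on clock names is the
contravariant action `ρ* : 𝒩(U) → 𝒩(V)`, subject to `∂_V(ρ*κ) ≤ ∂_U(κ)`. -/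
structure WHom (V U : World) where
  map : Fin U.n → Fin V.n
  le : ∀ κ, V.time (map κ) ≤ U.time κ

/-- The world `𝐔[κ ↦ m]`, replacing the time assigned to `κ` by `m`. -/
def World.set (U : World) (κ : Fin U.n) (m : ℕ) : World :=
  ⟨U.n, U.pos, Function.update U.time κ m⟩

/-- Presheaf propositions on worlds. -/
def Pred := World → Prop

/-- A predicate is monotone (a presheaf proposition) when it restricts along
world morphisms. -/
def Pred.Mono (φ : Pred) : Prop := ∀ {V U : World}, WHom V U → φ U → φ V

/-- Forcing clause for the later modality `𝐔 ⊩ ▷κ φ`: trivially true when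
`∂_U(κ) = 0`, and `𝐔[κ ↦ m] ⊩ φ` when `∂_U(κ) = m + 1`. -/
def Later (φ : Pred) (U : World) (κ : Fin U.n) : Prop :=
  ∀ m, U.time κ = m + 1 → φ (U.set κ m)


/-- Löb induction: if `𝐔 ⊩ (▷κ φ ⇒ φ)` then `𝐔 ⊩ φ`. -/
theorem loeb_induction (φ : Pred) (hφ : Pred.Mono φ) (U : World) (κ : Fin U.n)
    (h : ∀ (V : World) (ρ : WHom V U), Later φ V (ρ.map κ) → φ V) :
    φ U := by
  have key : ∀ m, m ≤ U.time κ → φ (U.set κ m) := by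
    intro m
    induction m with
    | zero =>
      intro _
      refine h (U.set κ 0) ⟨id, ?_⟩ ?_
      · intro i
        by_cases hi : i = κ
        · subst hi; simp [World.set]
        · simp [World.set, Function.update_of_ne hi]
      · intro k hk
        simp [World.set] at hk
    | succ m ih =>
      intro hm
      refine h (U.set κ (m+1)) ⟨id, ?_⟩ ?_
      · intro i
        by_cases hi : i = κ
        · subst hi; simpa [World.set] using hm
        · simp [World.set, Function.update_of_ne hi]
      · intro k hk
        simp only [World.set, id] at hk ⊢
        rw [Function.update_self] at hk
        have hk' : k = m := by omega
        subst hk'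
        refine hφ (U := U.set κ k) ⟨id, ?_⟩ (ih (by omega))
        intro i
        simp [World.set, Function.update_idem]
        show Function.update (Function.update U.time κ (k+1)) κ k i ≤ _
        rw [Function.update_idem]
  refine hφ (U := U.set κ (U.time κ)) ⟨id, ?_⟩ (key (U.time κ) le_rfl)
  intro i
  simp [World.set]
  exact le_rfl
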